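/- For all vectors u, w ∈ ℝ^N: |Σ_{i=1}^N (u_i³ − w_i³)| ≤ ‖u − w‖₂³ + 3·‖u‖₂·‖u − w‖₂² + 3·(Σ_{i=1}^N u_i⁴)^{1/2}·‖u − w‖₂. -/
import Mathlib

/-- For all vectors `u, w ∈ ℝ^N`:
`|Σᵢ (uᵢ³ − wᵢ³)| ≤ ‖u−w‖₂³ + 3‖u‖₂‖u−w‖₂² + 3(Σᵢ uᵢ⁴)^{1/2}‖u−w‖₂`. -/
theorem stmt_17 {N : ℕ} (u w : Fin N → ℝ) :
    |∑ i, (u i ^ 3 - w i ^ 3)| ≤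
      Real.sqrt (∑ i, (u i - w i) ^ 2) ^ 3
        + 3 * Real.sqrt (∑ i, u i ^ 2) * Real.sqrt (∑ i, (u i - w i) ^ 2) ^ 2
        + 3 * Real.sqrt (∑ i, u i ^ 4) * Real.sqrt (∑ i, (u i - w i) ^ 2) := by
  set d : Fin N → ℝ := fun i => u i - w i with hd
  set S : ℝ := Real.sqrt (∑ i, d i ^ 2) with hS
  have hSnn : 0 ≤ S := Real.sqrt_nonneg _
  have hS2 : S ^ 2 = ∑ i, d i ^ 2 := by
    rw [hS, Real.sq_sqrt (Finset.sum_nonneg fun i _ => sq_nonneg _)]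
  have hdle : ∀ i, |d i| ≤ S := by
    intro i
    rw [hS, ← Real.sqrt_sq_eq_abs]
    exact Real.sqrt_le_sqrt (Finset.single_le_sum (fun j _ => sq_nonneg (d j))
      (Finset.mem_univ i))
  have hule : ∀ i, |u i| ≤ Real.sqrt (∑ i, u i ^ 2) := by
    intro i
    rw [← Real.sqrt_sq_eq_abs]
    exact Real.sqrt_le_sqrt (Finset.single_le_sum (fun j _ => sq_nonneg (u j))
      (Finset.mem_univ i))
  -- rewrite the sum
  have hsum : ∑ i, (u i ^ 3 - w i ^ 3)
      = 3 * (∑ i, u i ^ 2 * d i) - 3 * (∑ i, u i * d i ^ 2) + ∑ i, d i ^ 3 := by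
    rw [Finset.mul_sum, Finset.mul_sum, ← Finset.sum_sub_distrib, ← Finset.sum_add_distrib]
    exact Finset.sum_congr rfl fun i _ => by simp only [hd]; ring
  -- bound A
  have hA : |∑ i, u i ^ 2 * d i| ≤ Real.sqrt (∑ i, u i ^ 4) * S := by
    calc |∑ i, u i ^ 2 * d i| ≤ ∑ i, |u i ^ 2 * d i| := Finset.abs_sum_le_sum_abs _ _
      _ = ∑ i, u i ^ 2 * |d i| := by
          refine Finset.sum_congr rfl fun i _ => ?_
          rw [abs_mul, abs_of_nonneg (sq_nonneg _)]
      _ ≤ Real.sqrt (∑ i, (u i ^ 2) ^ 2) * Real.sqrt (∑ i, |d i| ^ 2) :=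
          Real.sum_mul_le_sqrt_mul_sqrt _ _ _
      _ = Real.sqrt (∑ i, u i ^ 4) * S := by
          rw [hS]; congr 1
          · congr 1; exact Finset.sum_congr rfl fun i _ => by ring
          · congr 1; exact Finset.sum_congr rfl fun i _ => by rw [sq_abs]
  -- bound B
  have hB : |∑ i, u i * d i ^ 2| ≤ Real.sqrt (∑ i, u i ^ 2) * S ^ 2 := by
    calc |∑ i, u i * d i ^ 2| ≤ ∑ i, |u i * d i ^ 2| := Finset.abs_sum_le_sum_abs _ _
      _ ≤ ∑ i, Real.sqrt (∑ j, u j ^ 2) * d i ^ 2 := by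
          refine Finset.sum_le_sum fun i _ => ?_
          rw [abs_mul, abs_of_nonneg (sq_nonneg (d i))]
          exact mul_le_mul_of_nonneg_right (hule i) (sq_nonneg _)
      _ = Real.sqrt (∑ i, u i ^ 2) * S ^ 2 := by rw [← Finset.mul_sum, hS2]
  -- bound C
  have hC : |∑ i, d i ^ 3| ≤ S ^ 3 := by
    calc |∑ i, d i ^ 3| ≤ ∑ i, |d i ^ 3| := Finset.abs_sum_le_sum_abs _ _
      _ ≤ ∑ i, S * d i ^ 2 := by
          refine Finset.sum_le_sum fun i _ => ?_
          have : |d i ^ 3| = |d i| * d i ^ 2 := by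
            rw [abs_pow]
            calc |d i| ^ 3 = |d i| * |d i| ^ 2 := by ring
              _ = |d i| * d i ^ 2 := by rw [sq_abs]
          rw [this]
          exact mul_le_mul_of_nonneg_right (hdle i) (sq_nonneg _)
      _ = S ^ 3 := by rw [← Finset.mul_sum, ← hS2]; ring
  calc |∑ i, (u i ^ 3 - w i ^ 3)|
      = |3 * (∑ i, u i ^ 2 * d i) - 3 * (∑ i, u i * d i ^ 2) + ∑ i, d i ^ 3| := by rw [hsum]
    _ ≤ 3 * |∑ i, u i ^ 2 * d i| + 3 * |∑ i, u i * d i ^ 2| + |∑ i, d i ^ 3| := by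
        calc |3 * (∑ i, u i ^ 2 * d i) - 3 * (∑ i, u i * d i ^ 2) + ∑ i, d i ^ 3|
            ≤ |3 * (∑ i, u i ^ 2 * d i) - 3 * (∑ i, u i * d i ^ 2)| + |∑ i, d i ^ 3| :=
              abs_add_le _ _
          _ ≤ |3 * (∑ i, u i ^ 2 * d i)| + |3 * (∑ i, u i * d i ^ 2)| + |∑ i, d i ^ 3| := by
              gcongr; exact abs_sub _ _
          _ = 3 * |∑ i, u i ^ 2 * d i| + 3 * |∑ i, u i * d i ^ 2| + |∑ i, d i ^ 3| := by
              rw [abs_mul, abs_mul]; norm_num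
    _ ≤ 3 * (Real.sqrt (∑ i, u i ^ 4) * S) + 3 * (Real.sqrt (∑ i, u i ^ 2) * S ^ 2) + S ^ 3 := by
        gcongr
    _ = S ^ 3 + 3 * Real.sqrt (∑ i, u i ^ 2) * S ^ 2 + 3 * Real.sqrt (∑ i, u i ^ 4) * S := by
        ring
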